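/- Main theorem, implication (e)⇒(d) in finite type A: if a separated finite type A bow diagram as above admits a supersymmetric brane diagram giving rise to it (i.e. there exist F, P, Q as above realizing all segment dimensions), then s·k + v_s + u_k − v_0 ≥ 0 for every s ∈ {0,...,n} and k ∈ {0,...,w}. -/
import Mathlib


/-- **Main theorem, implication (e) ⇒ (d) in finite type A.**  If a separated finite type A
bow diagram (segment dimensions `v n = 0, ..., v 0` on the arrow side and
`u 0 = v 0, ..., u w = 0` on the x-point side) admits a supersymmetric brane diagram giving
rise to it — fixed D3-branes `F` with at most one per pair `(○_s, x_k)`, and unfixed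
D3-brane multiplicities `P` (between arrows) and `Q` (between x-points) realizing all
segment dimensions — then `s·k + v_s + u_k - v_0 ≥ 0` for all `0 ≤ s ≤ n`, `0 ≤ k ≤ w`. -/
theorem finite_supersymmetric_implies_susy_ineq
    (n w : ℕ) (hn : 1 ≤ n) (hw : 1 ≤ w)
    (v u : ℕ → ℤ) (hvn : v n = 0) (hu0 : u 0 = v 0) (huw : u w = 0)
    (F P Q : ℕ → ℕ → ℕ)
    (hF : ∀ s k : ℕ, 1 ≤ s → s ≤ n → 1 ≤ k → k ≤ w → F s k ≤ 1)
    (hv : ∀ j : ℕ, 1 ≤ j → j < n →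
      v j = (((∑ s ∈ Finset.Icc (j + 1) n, ∑ s' ∈ Finset.Icc 1 j, P s s')
        + ∑ s ∈ Finset.Icc (j + 1) n, ∑ k ∈ Finset.Icc 1 w, F s k : ℕ) : ℤ))
    (hv0 : v 0 = ((∑ s ∈ Finset.Icc 1 n, ∑ k ∈ Finset.Icc 1 w, F s k : ℕ) : ℤ))
    (hu : ∀ j : ℕ, 1 ≤ j → j < w →
      u j = (((∑ s ∈ Finset.Icc 1 n, ∑ k ∈ Finset.Icc (j + 1) w, F s k)
        + ∑ k ∈ Finset.Icc 1 j, ∑ k' ∈ Finset.Icc (j + 1) w, Q k k' : ℕ) : ℤ)) :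
    ∀ s k : ℕ, s ≤ n → k ≤ w → 0 ≤ (s : ℤ) * k + v s + u k - v 0 := by
  intro s k hs hk
  classical
  have hIcc1 : ∀ b : ℕ, Finset.Icc 1 b = Finset.Ioc 0 b := fun b => Finset.Icc_add_one_left_eq_Ioc 0 b
  -- lower bound for v s
  have hvs : ((∑ s' ∈ Finset.Ioc s n, ∑ k' ∈ Finset.Ioc 0 w, F s' k' : ℕ) : ℤ) ≤ v s := by
    rcases eq_or_lt_of_le hs with rfl | hsn
    · simp [hvn]
    · rcases Nat.eq_zero_or_pos s with rfl | hs1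
      · rw [hv0]
        simp [hIcc1]
      · rw [hv s hs1 hsn, Finset.Icc_add_one_left_eq_Ioc s n, hIcc1]
        exact_mod_cast Nat.le_add_left _ _
  -- lower bound for u k
  have huk : ((∑ s' ∈ Finset.Ioc 0 n, ∑ k' ∈ Finset.Ioc k w, F s' k' : ℕ) : ℤ) ≤ u k := by
    rcases eq_or_lt_of_le hk with rfl | hkw
    · simp [huw]
    · rcases Nat.eq_zero_or_pos k with rfl | hk1
      · rw [hu0, hv0]
        simp [hIcc1]
      · rw [hu k hk1 hkw, Finset.Icc_add_one_left_eq_Ioc k w, hIcc1]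
        exact_mod_cast Nat.le_add_right _ _
  -- split v 0 in ℕ
  have hsplit : (∑ s' ∈ Finset.Ioc 0 n, ∑ k' ∈ Finset.Ioc 0 w, F s' k')
      = (∑ s' ∈ Finset.Ioc 0 s, ∑ k' ∈ Finset.Ioc 0 w, F s' k')
        + ∑ s' ∈ Finset.Ioc s n, ∑ k' ∈ Finset.Ioc 0 w, F s' k' := by
    rw [Finset.sum_Ioc_consecutive _ (Nat.zero_le s) hs]
  have hrow : (∑ s' ∈ Finset.Ioc 0 s, ∑ k' ∈ Finset.Ioc 0 w, F s' k')
      = (∑ s' ∈ Finset.Ioc 0 s, ∑ k' ∈ Finset.Ioc 0 k, F s' k')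
        + ∑ s' ∈ Finset.Ioc 0 s, ∑ k' ∈ Finset.Ioc k w, F s' k' := by
    rw [← Finset.sum_add_distrib]
    exact Finset.sum_congr rfl fun s' _ =>
      (Finset.sum_Ioc_consecutive _ (Nat.zero_le k) hk).symm
  have hsmall : (∑ s' ∈ Finset.Ioc 0 s, ∑ k' ∈ Finset.Ioc 0 k, F s' k') ≤ s * k := by
    calc (∑ s' ∈ Finset.Ioc 0 s, ∑ k' ∈ Finset.Ioc 0 k, F s' k')
        ≤ ∑ s' ∈ Finset.Ioc 0 s, ∑ k' ∈ Finset.Ioc 0 k, 1 := by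
          apply Finset.sum_le_sum
          intro s' hs'
          apply Finset.sum_le_sum
          intro k' hk'
          simp only [Finset.mem_Ioc] at hs' hk'
          exact hF s' k' hs'.1 (hs'.2.trans hs) hk'.1 (hk'.2.trans hk)
      _ = s * k := by simp [Nat.card_Ioc]
  have hmid : (∑ s' ∈ Finset.Ioc 0 s, ∑ k' ∈ Finset.Ioc k w, F s' k')
      ≤ ∑ s' ∈ Finset.Ioc 0 n, ∑ k' ∈ Finset.Ioc k w, F s' k' :=
    Finset.sum_le_sum_of_subset (Finset.Ioc_subset_Ioc_right hs)
  have hnat : (∑ s' ∈ Finset.Ioc 0 n, ∑ k' ∈ Finset.Ioc 0 w, F s' k')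
      ≤ s * k + ((∑ s' ∈ Finset.Ioc 0 n, ∑ k' ∈ Finset.Ioc k w, F s' k')
        + ∑ s' ∈ Finset.Ioc s n, ∑ k' ∈ Finset.Ioc 0 w, F s' k') := by
    rw [hsplit, hrow]
    omega
  have hv0' : v 0 ≤ (s : ℤ) * k
      + (((∑ s' ∈ Finset.Ioc 0 n, ∑ k' ∈ Finset.Ioc k w, F s' k' : ℕ) : ℤ)
        + ((∑ s' ∈ Finset.Ioc s n, ∑ k' ∈ Finset.Ioc 0 w, F s' k' : ℕ) : ℤ)) := by
    rw [hv0]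
    simp only [hIcc1]
    exact_mod_cast hnat
  linarith
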